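/- Let T₁ and T₂ be stopping times with respect to the filtration (F_t) and let B ≥ 0 be a constant with T₁ ≤ B and T₂ ≤ B almost surely. Then E[(Π(T₂) − Π(T₁))²] ≤ (2B + 1)·E[|T₂ − T₁|]. -/

import Mathlib

open MeasureTheory ProbabilityTheory ENNReal

lemma exp_tsum' (x : ℝ) : ∑' n : ℕ, x ^ n / n.factorial = Real.exp x := by
  rw [Real.exp_eq_exp_ℝ, NormedSpace.exp_eq_tsum_div]

lemma summable_n_pow (l : ℝ) : Summable (fun n : ℕ => (n : ℝ) * l ^ n / n.factorial) := by
  rw [← summable_nat_add_iff 1]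
  have : (fun n : ℕ => ((n + 1 : ℕ) : ℝ) * l ^ (n + 1) / (n + 1).factorial)
      = fun n : ℕ => l * (l ^ n / n.factorial) := by
    funext n
    rw [Nat.factorial_succ]
    push_cast
    field_simp
    ring
  rw [this]
  exact (Real.summable_pow_div_factorial l).mul_left l

lemma tsum_n_pow (l : ℝ) : ∑' n : ℕ, (n : ℝ) * l ^ n / n.factorial = l * Real.exp l := by
  rw [Summable.tsum_eq_zero_add (summable_n_pow l)]
  have : (fun n : ℕ => ((n + 1 : ℕ) : ℝ) * l ^ (n + 1) / (n + 1).factorial)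
      = fun n : ℕ => l * (l ^ n / n.factorial) := by
    funext n
    rw [Nat.factorial_succ]
    push_cast
    field_simp
    ring
  simp only [Nat.cast_zero, pow_zero, Nat.factorial_zero, this]
  rw [tsum_mul_left, exp_tsum']
  simp

lemma summable_n2_pow (l : ℝ) : Summable (fun n : ℕ => (n : ℝ)^2 * l ^ n / n.factorial) := by
  have key : (fun n : ℕ => (n : ℝ)^2 * l ^ n / n.factorial)
      = (fun n : ℕ => (n : ℝ) * ((n:ℝ) - 1) * l ^ n / n.factorial)
        + (fun n : ℕ => (n : ℝ) * l ^ n / n.factorial) := by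
    funext n; simp [Pi.add_apply]; ring
  rw [key]
  refine Summable.add ?_ (summable_n_pow l)
  rw [← summable_nat_add_iff 2]
  have : (fun n : ℕ => ((n + 2 : ℕ) : ℝ) * (((n+2:ℕ):ℝ) - 1) * l ^ (n + 2) / (n + 2).factorial)
      = fun n : ℕ => (l * l) * (l ^ n / n.factorial) := by
    funext n
    rw [Nat.factorial_succ, Nat.factorial_succ]
    push_cast
    field_simp
    ring
  rw [this]
  exact (Real.summable_pow_div_factorial l).mul_left _

lemma tsum_n2_pow (l : ℝ) :
    ∑' n : ℕ, (n : ℝ)^2 * l ^ n / n.factorial = (l + l^2) * Real.exp l := by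
  have key : (fun n : ℕ => (n : ℝ)^2 * l ^ n / n.factorial)
      = (fun n : ℕ => (n : ℝ) * ((n:ℝ) - 1) * l ^ n / n.factorial)
        + (fun n : ℕ => (n : ℝ) * l ^ n / n.factorial) := by
    funext n; simp [Pi.add_apply]; ring
  have hsum2 : Summable (fun n : ℕ => (n : ℝ) * ((n:ℝ) - 1) * l ^ n / n.factorial) := by
    rw [← summable_nat_add_iff 2]
    have : (fun n : ℕ => ((n + 2 : ℕ) : ℝ) * (((n+2:ℕ):ℝ) - 1) * l ^ (n + 2) / (n + 2).factorial)
        = fun n : ℕ => (l * l) * (l ^ n / n.factorial) := by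
      funext n
      rw [Nat.factorial_succ, Nat.factorial_succ]
      push_cast
      field_simp
      ring
    rw [this]
    exact (Real.summable_pow_div_factorial l).mul_left _
  rw [key, Pi.add_def, Summable.tsum_add hsum2 (summable_n_pow l), tsum_n_pow]
  have h2 : ∑' n : ℕ, (n : ℝ) * ((n:ℝ) - 1) * l ^ n / n.factorial = l^2 * Real.exp l := by
    rw [Summable.tsum_eq_zero_add hsum2, Summable.tsum_eq_zero_add ((summable_nat_add_iff 1).mpr hsum2)]
    have : (fun n : ℕ => ((n + 1 + 1 : ℕ) : ℝ) * (((n+1+1:ℕ):ℝ) - 1) * l ^ (n + 1 + 1) / (n + 1 + 1).factorial)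
        = fun n : ℕ => (l * l) * (l ^ n / n.factorial) := by
      funext n
      rw [Nat.factorial_succ, Nat.factorial_succ]
      push_cast
      field_simp
      ring
    rw [this, tsum_mul_left, exp_tsum']
    simp
    ring
  rw [h2]
  ring

lemma lintegral_comp_nat {Ω : Type*} {m : MeasurableSpace Ω} (μ : Measure Ω)
    (Y : Ω → ℕ) (hY : Measurable Y) (g : ℕ → ℝ≥0∞) :
    ∫⁻ ω, g (Y ω) ∂μ = ∑' n : ℕ, g n * μ {ω | Y ω = n} := by
  rw [← lintegral_map (f := g) (measurable_of_countable g) hY, lintegral_countable']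
  congr 1
  funext n
  rw [Measure.map_apply hY (MeasurableSet.singleton n)]
  rfl

lemma poisson_mean {Ω : Type*} {m : MeasurableSpace Ω} (μ : Measure Ω)
    (Y : Ω → ℕ) (hY : Measurable Y) (l : ℝ) (hl : 0 ≤ l)
    (hlaw : ∀ n : ℕ, μ {ω | Y ω = n} = ENNReal.ofReal (Real.exp (-l) * l ^ n / n.factorial)) :
    ∫⁻ ω, (Y ω : ℝ≥0∞) ∂μ = ENNReal.ofReal l := by
  rw [lintegral_comp_nat μ Y hY (fun n => (n : ℝ≥0∞))]
  have h1 : ∀ n : ℕ, (n : ℝ≥0∞) * μ {ω | Y ω = n}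
      = ENNReal.ofReal (Real.exp (-l) * ((n : ℝ) * l ^ n / n.factorial)) := by
    intro n
    rw [hlaw n, ← ENNReal.ofReal_natCast n, ← ENNReal.ofReal_mul (Nat.cast_nonneg n)]
    congr 1
    ring
  simp only [h1]
  rw [← ENNReal.ofReal_tsum_of_nonneg]
  · congr 1
    rw [tsum_mul_left, tsum_n_pow]; rw [show Real.exp (-l) * (l * Real.exp l) = l * (Real.exp (-l) * Real.exp l) by ring, ← Real.exp_add]
    simp
  · intro n
    positivity
  · exact (summable_n_pow l).mul_left _

lemma poisson_sq_mean {Ω : Type*} {m : MeasurableSpace Ω} (μ : Measure Ω)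
    (Y : Ω → ℕ) (hY : Measurable Y) (l : ℝ) (hl : 0 ≤ l)
    (hlaw : ∀ n : ℕ, μ {ω | Y ω = n} = ENNReal.ofReal (Real.exp (-l) * l ^ n / n.factorial)) :
    ∫⁻ ω, ((Y ω : ℝ≥0∞)) ^ 2 ∂μ = ENNReal.ofReal (l + l ^ 2) := by
  rw [lintegral_comp_nat μ Y hY (fun n => (n : ℝ≥0∞) ^ 2)]
  have h1 : ∀ n : ℕ, (n : ℝ≥0∞) ^ 2 * μ {ω | Y ω = n}
      = ENNReal.ofReal (Real.exp (-l) * ((n : ℝ) ^ 2 * l ^ n / n.factorial)) := by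
    intro n
    rw [hlaw n, ← ENNReal.ofReal_natCast n, ← ENNReal.ofReal_pow (Nat.cast_nonneg n),
      ← ENNReal.ofReal_mul (by positivity)]
    congr 1
    ring
  simp only [h1]
  rw [← ENNReal.ofReal_tsum_of_nonneg]
  · congr 1
    rw [tsum_mul_left, tsum_n2_pow]; rw [show Real.exp (-l) * ((l + l^2) * Real.exp l) = (l + l^2) * (Real.exp (-l) * Real.exp l) by ring, ← Real.exp_add]
    simp
  · intro n
    positivity
  · exact (summable_n2_pow l).mul_left _



/-- `Pproc` is a unit-rate Poisson process adapted to the filtration `F`: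
it starts at `0`, has nondecreasing right-continuous sample paths, is adapted,
and for `0 ≤ s ≤ t` the increment `Pproc t - Pproc s` is independent of `F s`
and Poisson distributed with mean `t - s`. -/
structure IsUnitRatePoissonProcess {Ω : Type*} {m : MeasurableSpace Ω}
    (μ : Measure Ω) (F : Filtration ℝ m) (Pproc : ℝ → Ω → ℕ) : Prop where
  init : ∀ ω, Pproc 0 ω = 0
  mono : ∀ ω, MonotoneOn (fun t => Pproc t ω) (Set.Ici 0)
  rightCont : ∀ ω, ∀ t : ℝ, 0 ≤ t →
    ContinuousWithinAt (fun s => (Pproc s ω : ℝ)) (Set.Ici t) t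
  adapted : Adapted F Pproc
  indep : ∀ s t : ℝ, 0 ≤ s → s ≤ t →
    Indep (MeasurableSpace.comap (fun ω => Pproc t ω - Pproc s ω) ⊤) (F s) μ
  poisson_law : ∀ s t : ℝ, 0 ≤ s → s ≤ t → ∀ n : ℕ,
    μ {ω | Pproc t ω - Pproc s ω = n} =
      ENNReal.ofReal (Real.exp (-(t - s)) * (t - s) ^ n / n.factorial)

section
set_option linter.unusedSectionVars false
variable {Ω : Type*} {m : MeasurableSpace Ω} (μ : Measure Ω) [IsProbabilityMeasure μ]
  (F : Filtration ℝ m) (Pproc : ℝ → Ω → ℕ)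

lemma meas_Pproc (hPP : IsUnitRatePoissonProcess μ F Pproc) (t : ℝ) :
    Measurable (Pproc t) :=
  Measurable.mono (hPP.adapted t) (F.le t) le_rfl

lemma increment_mean (hPP : IsUnitRatePoissonProcess μ F Pproc)
    (s t : ℝ) (hs : 0 ≤ s) (hst : s ≤ t) :
    ∫⁻ ω, ((Pproc t ω - Pproc s ω : ℕ) : ℝ≥0∞) ∂μ = ENNReal.ofReal (t - s) :=
  poisson_mean μ _ ((meas_Pproc μ F Pproc hPP t).sub (meas_Pproc μ F Pproc hPP s))
    (t - s) (by linarith) (hPP.poisson_law s t hs hst)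

lemma increment_sq_mean (hPP : IsUnitRatePoissonProcess μ F Pproc)
    (s t : ℝ) (hs : 0 ≤ s) (hst : s ≤ t) :
    ∫⁻ ω, ((Pproc t ω - Pproc s ω : ℕ) : ℝ≥0∞) ^ 2 ∂μ
      = ENNReal.ofReal ((t - s) + (t - s) ^ 2) :=
  poisson_sq_mean μ _ ((meas_Pproc μ F Pproc hPP t).sub (meas_Pproc μ F Pproc hPP s))
    (t - s) (by linarith) (hPP.poisson_law s t hs hst)

lemma indep_mul (hPP : IsUnitRatePoissonProcess μ F Pproc)
    (s t : ℝ) (hs : 0 ≤ s) (hst : s ≤ t) (Y : Ω → ℝ≥0∞) (hY : Measurable[F s] Y)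
    (g : ℕ → ℝ≥0∞) :
    ∫⁻ ω, Y ω * g (Pproc t ω - Pproc s ω) ∂μ
      = (∫⁻ ω, Y ω ∂μ) * ∫⁻ ω, g (Pproc t ω - Pproc s ω) ∂μ := by
  have hD : Measurable (fun ω => Pproc t ω - Pproc s ω) :=
    (meas_Pproc μ F Pproc hPP t).sub (meas_Pproc μ F Pproc hPP s)
  have hMf : MeasurableSpace.comap (fun ω => Pproc t ω - Pproc s ω) ⊤ ≤ m :=
    hD.comap_le
  have hf : Measurable[MeasurableSpace.comap (fun ω => Pproc t ω - Pproc s ω) ⊤]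
      (fun ω => g (Pproc t ω - Pproc s ω)) :=
    (measurable_of_countable g).comp (Measurable.of_comap_le le_rfl)
  have := lintegral_mul_eq_lintegral_mul_lintegral_of_independent_measurableSpace
    (μ := μ) hMf (F.le s) (hPP.indep s t hs hst) hf hY
  calc ∫⁻ ω, Y ω * g (Pproc t ω - Pproc s ω) ∂μ
      = ∫⁻ ω, g (Pproc t ω - Pproc s ω) * Y ω ∂μ := by simp_rw [mul_comm]
    _ = (∫⁻ ω, g (Pproc t ω - Pproc s ω) ∂μ) * ∫⁻ ω, Y ω ∂μ := this
    _ = (∫⁻ ω, Y ω ∂μ) * ∫⁻ ω, g (Pproc t ω - Pproc s ω) ∂μ := mul_comm _ _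

end
lemma nat_tele (q : ℕ → ℕ) (hq : Monotone q) (a b : ℕ) (hab : a ≤ b) :
    ∑ k ∈ Finset.Ico a b, (q (k + 1) - q k) = q b - q a := by
  induction b, hab using Nat.le_induction with
  | base => simp
  | succ b hab ih =>
      rw [Finset.sum_Ico_succ_top (by omega), ih]
      have h1 := hq hab
      have h2 : q b ≤ q (b + 1) := hq (by omega)
      omega
section
set_option linter.unusedSectionVars false
variable {Ω : Type*} {m : MeasurableSpace Ω} (μ : Measure Ω) [IsProbabilityMeasure μ]
  (F : Filtration ℝ m) (Pproc : ℝ → Ω → ℕ)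

lemma discrete_bound (hPP : IsUnitRatePoissonProcess μ F Pproc)
    (δ : ℝ) (hδ : 0 < δ) (K : ℕ) (S U : Ω → ℝ)
    (hS : IsStoppingTime F (fun ω => (S ω : WithTop ℝ))) (hU : IsStoppingTime F (fun ω => (U ω : WithTop ℝ)))
    (hSU : ∀ ω, S ω ≤ U ω)
    (hSg : ∀ ω, ∃ k : ℕ, S ω = k * δ)
    (hUg : ∀ ω, ∃ k : ℕ, k ≤ K ∧ U ω = k * δ) :
    ∫⁻ ω, ((Pproc (U ω) ω - Pproc (S ω) ω : ℕ) : ℝ≥0∞) ^ 2 ∂μ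
      ≤ ENNReal.ofReal (1 + δ + 2 * K * δ) * ∫⁻ ω, ENNReal.ofReal (U ω - S ω) ∂μ := by
  -- the events and increments
  set A : ℕ → Set Ω := fun k => {ω | S ω ≤ k * δ} ∩ {ω | U ω ≤ k * δ}ᶜ with hA_def
  have hA : ∀ k : ℕ, MeasurableSet[F (k * δ)] (A k) :=
    fun k => by
      have h1 := hS ((k : ℝ) * δ)
      have h2 := hU ((k : ℝ) * δ)
      simp only [WithTop.coe_le_coe] at h1 h2
      exact h1.inter h2.compl
  have hAm : ∀ k : ℕ, MeasurableSet (A k) := fun k => F.le _ _ (hA k)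
  set D : ℕ → Ω → ℕ := fun k ω => Pproc (((k : ℕ) + 1 : ℕ) * δ) ω - Pproc (k * δ) ω with hD_def
  have hkδ : ∀ k : ℕ, (0 : ℝ) ≤ k * δ := fun k => by positivity
  have hkδ' : ∀ k : ℕ, ((k : ℕ) : ℝ) * δ ≤ (((k : ℕ) + 1 : ℕ) : ℝ) * δ := by
    intro k; push_cast; nlinarith
  have hmeasP : ∀ t : ℝ, Measurable (Pproc t) := meas_Pproc μ F Pproc hPP
  have hmeasPF : ∀ s t : ℝ, s ≤ t → Measurable[F t] (Pproc s) :=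
    fun s t hst => Measurable.mono (hPP.adapted s) (F.mono hst) le_rfl
  have hD_meas : ∀ k, Measurable (D k) := fun k => (hmeasP _).sub (hmeasP _)
  set g : ℕ → Ω → ℝ≥0∞ := fun k => (A k).indicator (fun ω => ((D k ω : ℕ) : ℝ≥0∞)) with hg_def
  have hg_meas : ∀ k, Measurable (g k) :=
    fun k => ((measurable_of_countable _).comp (hD_meas k)).indicator (hAm k)
  -- membership in A k in grid terms
  have hA_mem : ∀ (k a b : ℕ) (ω : Ω), S ω = a * δ → U ω = b * δ →
      (ω ∈ A k ↔ a ≤ k ∧ k < b) := by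
    intro k a b ω hSa hUb
    simp only [hA_def, Set.mem_inter_iff, Set.mem_compl_iff, Set.mem_setOf_eq, hSa, hUb]
    constructor
    · rintro ⟨h1, h2⟩
      constructor
      · have h3 : (a : ℝ) ≤ k := le_of_mul_le_mul_right (by linarith) hδ
        exact_mod_cast h3
      · by_contra hc
        exact h2 (by nlinarith [(Nat.cast_le (α := ℝ)).mpr (not_lt.mp hc)])
    · rintro ⟨h1, h2⟩
      refine ⟨by nlinarith [(Nat.cast_le (α := ℝ)).mpr h1], fun hc => ?_⟩
      have : (b : ℝ) ≤ k := le_of_mul_le_mul_right (by linarith) hδ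
      exact absurd (Nat.cast_le.mp this) (not_le.mpr h2)
  -- pointwise telescoping
  have hX_eq : ∀ ω, ((Pproc (U ω) ω - Pproc (S ω) ω : ℕ) : ℝ≥0∞)
      = ∑ k ∈ Finset.range K, g k ω := by
    intro ω
    obtain ⟨a, hSa⟩ := hSg ω
    obtain ⟨b, hbK, hUb⟩ := hUg ω
    have hab : a ≤ b := by
      have := hSU ω
      rw [hSa, hUb] at this
      have h3 : (a : ℝ) ≤ b := le_of_mul_le_mul_right (by linarith) hδ
      exact_mod_cast h3
    set q : ℕ → ℕ := fun k => Pproc (k * δ) ω with hq_def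
    have hq : Monotone q := by
      intro i j hij
      exact hPP.mono ω (Set.mem_Ici.mpr (hkδ i)) (Set.mem_Ici.mpr (hkδ j))
        (by nlinarith [(Nat.cast_le (α := ℝ)).mpr hij])
    have hterm : ∀ k ∈ Finset.range K, g k ω
        = (((if a ≤ k ∧ k < b then q (k + 1) - q k else 0 : ℕ)) : ℝ≥0∞) := by
      intro k _
      rw [hg_def]
      simp only [Set.indicator_apply]
      rw [if_congr (hA_mem k a b ω hSa hUb) rfl rfl]
      split_ifs with h
      · rfl
      · simp
    rw [Finset.sum_congr rfl hterm, ← Nat.cast_sum, Finset.sum_ite, Finset.sum_const_zero,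
      add_zero]
    have hfilter : (Finset.range K).filter (fun k => a ≤ k ∧ k < b) = Finset.Ico a b := by
      ext k
      simp only [Finset.mem_filter, Finset.mem_range, Finset.mem_Ico]
      omega
    rw [hfilter, nat_tele q hq a b hab, hSa, hUb]
  -- pointwise identity for the time difference
  have hΔ_eq : ∀ ω, ENNReal.ofReal (U ω - S ω)
      = ∑ k ∈ Finset.range K, (A k).indicator (fun _ => ENNReal.ofReal δ) ω := by
    intro ω
    obtain ⟨a, hSa⟩ := hSg ω
    obtain ⟨b, hbK, hUb⟩ := hUg ω
    have hab : a ≤ b := by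
      have := hSU ω
      rw [hSa, hUb] at this
      have h3 : (a : ℝ) ≤ b := le_of_mul_le_mul_right (by linarith) hδ
      exact_mod_cast h3
    have hterm : ∀ k ∈ Finset.range K, (A k).indicator (fun _ => ENNReal.ofReal δ) ω
        = (if a ≤ k ∧ k < b then ENNReal.ofReal δ else 0) := by
      intro k _
      simp only [Set.indicator_apply]
      rw [if_congr (hA_mem k a b ω hSa hUb) rfl rfl]
    rw [Finset.sum_congr rfl hterm, Finset.sum_ite, Finset.sum_const_zero, add_zero]
    have hfilter : (Finset.range K).filter (fun k => a ≤ k ∧ k < b) = Finset.Ico a b := by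
      ext k
      simp only [Finset.mem_filter, Finset.mem_range, Finset.mem_Ico]
      omega
    rw [hfilter, Finset.sum_const, Nat.card_Ico, hSa, hUb, nsmul_eq_mul,
      ← ENNReal.ofReal_natCast, ← ENNReal.ofReal_mul (Nat.cast_nonneg _)]
    congr 1
    push_cast [hab]
    ring
  -- integral of the time difference
  have hΔ_int : ∫⁻ ω, ENNReal.ofReal (U ω - S ω) ∂μ
      = (∑ k ∈ Finset.range K, μ (A k)) * ENNReal.ofReal δ := by
    rw [lintegral_congr hΔ_eq,
      lintegral_finset_sum _ (fun k _ => measurable_const.indicator (hAm k)),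
      Finset.sum_mul]
    refine Finset.sum_congr rfl fun k _ => ?_
    rw [lintegral_indicator_const (hAm k), mul_comm]
  have hind_meas : ∀ k : ℕ, Measurable[F ((k : ℝ) * δ)]
      ((A k).indicator (fun _ => (1 : ℝ≥0∞))) :=
    fun k => measurable_const.indicator (hA k)
  -- expectation of g k
  have hgk : ∀ k, ∫⁻ ω, g k ω ∂μ = μ (A k) * ENNReal.ofReal δ := by
    intro k
    have hpt : ∀ ω, g k ω
        = (A k).indicator (fun _ => (1 : ℝ≥0∞)) ω * ((D k ω : ℕ) : ℝ≥0∞) := by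
      intro ω
      simp only [hg_def, Set.indicator_apply]
      split_ifs <;> simp
    rw [lintegral_congr hpt,
      indep_mul μ F Pproc hPP _ _ (hkδ k) (hkδ' k) _ (hind_meas k) (fun n => (n : ℝ≥0∞)),
      increment_mean μ F Pproc hPP _ _ (hkδ k) (hkδ' k),
      lintegral_indicator_const (hAm k), one_mul]
    congr 1
    push_cast
    ring
  -- second moment of g k
  have hgk2 : ∀ k, ∫⁻ ω, (g k ω) ^ 2 ∂μ = μ (A k) * ENNReal.ofReal (δ + δ ^ 2) := by
    intro k
    have hpt : ∀ ω, (g k ω) ^ 2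
        = (A k).indicator (fun _ => (1 : ℝ≥0∞)) ω * ((D k ω : ℕ) : ℝ≥0∞) ^ 2 := by
      intro ω
      simp only [hg_def, Set.indicator_apply]
      split_ifs <;> simp
    rw [lintegral_congr hpt,
      indep_mul μ F Pproc hPP _ _ (hkδ k) (hkδ' k) _ (hind_meas k)
        (fun n => ((n : ℝ≥0∞)) ^ 2),
      increment_sq_mean μ F Pproc hPP _ _ (hkδ k) (hkδ' k),
      lintegral_indicator_const (hAm k), one_mul]
    congr 1
    push_cast
    ring
  -- measurability of g k with respect to later σ-algebras
  have hgF : ∀ k n : ℕ, k < n → Measurable[F ((n : ℝ) * δ)] (g k) := by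
    intro k n hk
    have hc1 : ((k : ℝ)) * δ ≤ (n : ℝ) * δ := by
      nlinarith [(Nat.cast_le (α := ℝ)).mpr hk.le]
    have hc2 : ((((k : ℕ) + 1 : ℕ)) : ℝ) * δ ≤ (n : ℝ) * δ := by
      have hkk : ((k : ℝ)) + 1 ≤ (n : ℝ) := by exact_mod_cast Nat.succ_le_of_lt hk
      push_cast
      nlinarith
    exact ((measurable_of_countable _).comp
      ((hmeasPF _ _ hc2).sub (hmeasPF _ _ hc1))).indicator ((F.mono hc1) _ (hA k))
  -- partial sums
  set P : ℕ → Ω → ℝ≥0∞ := fun n ω => ∑ k ∈ Finset.range n, g k ω with hP_def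
  have hP_meas : ∀ n, Measurable (P n) :=
    fun n => Finset.measurable_sum _ (fun k _ => hg_meas k)
  have hP_measF : ∀ n : ℕ, Measurable[F ((n : ℝ) * δ)] (P n) :=
    fun n => Finset.measurable_sum _ (fun k hk => hgF k n (Finset.mem_range.mp hk))
  have hP_int : ∀ n, ∫⁻ ω, P n ω ∂μ
      = (∑ k ∈ Finset.range n, μ (A k)) * ENNReal.ofReal δ := by
    intro n
    simp only [hP_def]
    rw [lintegral_finset_sum _ (fun k _ => hg_meas k), Finset.sum_mul]
    exact Finset.sum_congr rfl fun k _ => hgk k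
  -- cross term estimate
  have hcross : ∀ n, ∫⁻ ω, P n ω * g n ω ∂μ
      ≤ ((∑ k ∈ Finset.range n, μ (A k)) * ENNReal.ofReal δ) * ENNReal.ofReal δ := by
    intro n
    have hpt : ∀ ω, P n ω * g n ω
        = (P n ω * (A n).indicator (fun _ => (1 : ℝ≥0∞)) ω) * ((D n ω : ℕ) : ℝ≥0∞) := by
      intro ω
      simp only [hg_def, Set.indicator_apply]
      split_ifs <;> simp [mul_assoc]
    rw [lintegral_congr hpt,
      indep_mul μ F Pproc hPP _ _ (hkδ n) (hkδ' n) (fun ω => P n ω * (A n).indicator (fun _ => (1 : ℝ≥0∞)) ω)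
        ((hP_measF n).mul (hind_meas n) : Measurable[F ((n : ℝ) * δ)] (P n * (A n).indicator (fun _ => (1 : ℝ≥0∞))))
        (fun i => (i : ℝ≥0∞)),
      increment_mean μ F Pproc hPP _ _ (hkδ n) (hkδ' n)]
    have hofreq : ENNReal.ofReal ((((n : ℕ) + 1 : ℕ)) * δ - (n : ℝ) * δ)
        = ENNReal.ofReal δ := by
      congr 1
      push_cast
      ring
    rw [hofreq]
    refine mul_le_mul_left ?_ _
    rw [← hP_int n]
    refine lintegral_mono fun ω => ?_
    have hle1 : (A n).indicator (fun _ => (1 : ℝ≥0∞)) ω ≤ 1 := by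
      simp only [Set.indicator_apply]
      split_ifs <;> simp
    calc P n ω * (A n).indicator (fun _ => (1 : ℝ≥0∞)) ω
        ≤ P n ω * 1 := mul_le_mul_right hle1 _
      _ = P n ω := mul_one _
  set d : ℝ≥0∞ := ENNReal.ofReal δ with hd_def
  -- main induction
  have hmain : ∀ n : ℕ, ∫⁻ ω, (P n ω) ^ 2 ∂μ
      ≤ (d + d ^ 2 + 2 * n * d ^ 2) * ∑ k ∈ Finset.range n, μ (A k) := by
    intro n
    induction n with
    | zero => simp [hP_def]
    | succ n ih =>
        have hexp : ∀ ω, (P (n + 1) ω) ^ 2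
            = (P n ω) ^ 2 + 2 * (P n ω * g n ω) + (g n ω) ^ 2 := by
          intro ω
          simp only [hP_def, Finset.sum_range_succ]
          ring
        rw [lintegral_congr hexp,
          lintegral_add_right _ ((hg_meas n).pow_const 2),
          lintegral_add_left ((hP_meas n).pow_const 2),
          lintegral_const_mul 2 (f := fun ω => P n ω * g n ω) ((hP_meas n).mul (hg_meas n) : Measurable (P n * g n))]
        set a := μ (A n)
        set mm := ∑ k ∈ Finset.range n, μ (A k) with hmm_def
        have hb1 : 2 * ∫⁻ ω, P n ω * g n ω ∂μ ≤ 2 * (mm * d * d) :=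
          mul_le_mul_right (hcross n) 2
        have harith : (d + d ^ 2 + 2 * n * d ^ 2) * mm + 2 * (mm * d * d)
              + a * (d + d ^ 2) + 2 * ((n : ℝ≥0∞) + 1) * d ^ 2 * a
            = (d + d ^ 2 + 2 * ((n : ℕ) + 1 : ℕ) * d ^ 2) * (mm + a) := by
          push_cast
          ring
        rw [Finset.sum_range_succ, ← hmm_def]
        calc ∫⁻ ω, (P n ω) ^ 2 ∂μ + 2 * ∫⁻ ω, P n ω * g n ω ∂μ + ∫⁻ ω, (g n ω) ^ 2 ∂μ
            ≤ (d + d ^ 2 + 2 * n * d ^ 2) * mm + 2 * (mm * d * d) + a * (d + d ^ 2) := by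
              refine add_le_add (add_le_add ih hb1) ?_
              rw [hgk2 n]
              refine le_of_eq ?_
              rw [hd_def, ENNReal.ofReal_add hδ.le (by positivity),
                ENNReal.ofReal_pow hδ.le]
          _ ≤ (d + d ^ 2 + 2 * n * d ^ 2) * mm + 2 * (mm * d * d)
              + a * (d + d ^ 2) + 2 * ((n : ℝ≥0∞) + 1) * d ^ 2 * a := le_self_add
          _ = (d + d ^ 2 + 2 * ((n : ℕ) + 1 : ℕ) * d ^ 2) * (mm + a) := harith
  -- conclusion
  have hXP : ∀ ω, ((Pproc (U ω) ω - Pproc (S ω) ω : ℕ) : ℝ≥0∞) ^ 2 = (P K ω) ^ 2 :=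
    fun ω => by rw [hX_eq ω]
  rw [lintegral_congr hXP, hΔ_int]
  refine le_trans (hmain K) ?_
  have hfinal : (d + d ^ 2 + 2 * (K : ℝ≥0∞) * d ^ 2)
      = ENNReal.ofReal (1 + δ + 2 * K * δ) * d := by
    rw [hd_def, ← ENNReal.ofReal_pow hδ.le, ← ENNReal.ofReal_mul (by positivity)]
    rw [show ((K : ℝ≥0∞)) = ENNReal.ofReal ((K : ℕ) : ℝ) by rw [ENNReal.ofReal_natCast]]
    rw [← ENNReal.ofReal_ofNat 2, ← ENNReal.ofReal_mul (by norm_num),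
      ← ENNReal.ofReal_mul (by positivity), ← ENNReal.ofReal_add hδ.le (by positivity),
      ← ENNReal.ofReal_add (by positivity) (by positivity)]
    congr 1
    ring
  rw [hfinal, mul_assoc, mul_comm d, ← mul_assoc]
end
section
set_option linter.unusedSectionVars false
variable {Ω : Type*} {m : MeasurableSpace Ω} (μ : Measure Ω) [IsProbabilityMeasure μ]
  (F : Filtration ℝ m) (Pproc : ℝ → Ω → ℕ)

/-- discrete approximation of a stopping time from above, capped at `K * δ`. -/
noncomputable def dApprox (V : Ω → ℝ) (δ : ℝ) (K : ℕ) : Ω → ℝ :=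
  fun ω => ((min ⌈V ω / δ⌉₊ K : ℕ) : ℝ) * δ

lemma dApprox_isStoppingTime (V : Ω → ℝ) (hV : IsStoppingTime F (fun ω => (V ω : WithTop ℝ)))
    (δ : ℝ) (hδ : 0 < δ) (K : ℕ) : IsStoppingTime F (fun ω => (dApprox V δ K ω : WithTop ℝ)) := by
  intro t
  simp only [WithTop.coe_le_coe]
  by_cases htK : ((K : ℕ) : ℝ) * δ ≤ t
  · have huniv : {ω | dApprox V δ K ω ≤ t} = Set.univ := by
      refine Set.eq_univ_of_forall fun ω => ?_
      have h1 : ((min ⌈V ω / δ⌉₊ K : ℕ) : ℝ) ≤ (K : ℝ) :=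
        Nat.cast_le.mpr (min_le_right _ _)
      simp only [Set.mem_setOf_eq, dApprox]
      nlinarith
    rw [huniv]
    exact MeasurableSet.univ
  · push_neg at htK
    by_cases ht0 : 0 ≤ t
    · have hset : {ω | dApprox V δ K ω ≤ t} = {ω | V ω ≤ ((⌊t / δ⌋₊ : ℕ) : ℝ) * δ} := by
        ext ω
        simp only [Set.mem_setOf_eq, dApprox]
        constructor
        · intro h
          have hmin : min ⌈V ω / δ⌉₊ K = ⌈V ω / δ⌉₊ := by
            rcases min_cases (⌈V ω / δ⌉₊) K with ⟨h1, _⟩ | ⟨h1, h2⟩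
            · exact h1
            · exfalso
              rw [h1] at h
              linarith
          rw [hmin] at h
          have h2 : (⌈V ω / δ⌉₊ : ℝ) ≤ t / δ := by
            rw [le_div_iff₀ hδ]
            linarith [h]
          have h3 : ⌈V ω / δ⌉₊ ≤ ⌊t / δ⌋₊ := by
            rw [Nat.le_floor_iff (by positivity)]
            exact h2
          have h4 : V ω / δ ≤ (⌊t / δ⌋₊ : ℝ) := le_trans (Nat.le_ceil _) (Nat.cast_le.mpr h3)
          rw [div_le_iff₀ hδ] at h4
          exact h4
        · intro h
          have h2 : V ω / δ ≤ (⌊t / δ⌋₊ : ℝ) := by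
            rw [div_le_iff₀ hδ]
            exact h
          have h3 : ⌈V ω / δ⌉₊ ≤ ⌊t / δ⌋₊ := Nat.ceil_le.mpr h2
          have h4 : ((min ⌈V ω / δ⌉₊ K : ℕ) : ℝ) ≤ (⌊t / δ⌋₊ : ℝ) :=
            Nat.cast_le.mpr (le_trans (min_le_left _ _) h3)
          have h5 : ((⌊t / δ⌋₊ : ℕ) : ℝ) * δ ≤ t := by
            have h6 : ((⌊t / δ⌋₊ : ℕ) : ℝ) ≤ t / δ := Nat.floor_le (by positivity)
            calc ((⌊t / δ⌋₊ : ℕ) : ℝ) * δ ≤ (t / δ) * δ := by nlinarith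
              _ = t := by field_simp
          nlinarith
      rw [hset]
      have hle : ((⌊t / δ⌋₊ : ℕ) : ℝ) * δ ≤ t := by
        have h6 : ((⌊t / δ⌋₊ : ℕ) : ℝ) ≤ t / δ := Nat.floor_le (by positivity)
        calc ((⌊t / δ⌋₊ : ℕ) : ℝ) * δ ≤ (t / δ) * δ := by nlinarith
          _ = t := by field_simp
      exact F.mono hle _ (by
        have h := hV (((⌊t / δ⌋₊ : ℕ) : ℝ) * δ)
        simp only [WithTop.coe_le_coe] at h
        exact h)
    · push_neg at ht0
      have hempty : {ω | dApprox V δ K ω ≤ t} = ∅ := by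
        refine Set.eq_empty_of_forall_notMem fun ω h => ?_
        simp only [Set.mem_setOf_eq, dApprox] at h
        nlinarith [mul_nonneg (Nat.cast_nonneg (min ⌈V ω / δ⌉₊ K)) hδ.le]
      rw [hempty]
      exact @MeasurableSet.empty _ (F t)

lemma dApprox_grid (V : Ω → ℝ) (δ : ℝ) (K : ℕ) :
    ∀ ω, ∃ k : ℕ, k ≤ K ∧ dApprox V δ K ω = k * δ :=
  fun ω => ⟨min ⌈V ω / δ⌉₊ K, min_le_right _ _, rfl⟩

lemma dApprox_nonneg (V : Ω → ℝ) (δ : ℝ) (hδ : 0 < δ) (K : ℕ) (ω : Ω) :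
    0 ≤ dApprox V δ K ω := by
  have := Nat.cast_nonneg (α := ℝ) (min ⌈V ω / δ⌉₊ K)
  simp only [dApprox]
  positivity

lemma dApprox_mono (V W : Ω → ℝ) (δ : ℝ) (hδ : 0 < δ) (K : ℕ) (ω : Ω)
    (h : V ω ≤ W ω) : dApprox V δ K ω ≤ dApprox W δ K ω := by
  have h1 : ⌈V ω / δ⌉₊ ≤ ⌈W ω / δ⌉₊ := Nat.ceil_le_ceil (by gcongr)
  have h2 : min ⌈V ω / δ⌉₊ K ≤ min ⌈W ω / δ⌉₊ K := min_le_min h1 le_rfl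
  have h3 := (Nat.cast_le (α := ℝ)).mpr h2
  simp only [dApprox]
  nlinarith

lemma dApprox_le_cap (V : Ω → ℝ) (δ : ℝ) (hδ : 0 < δ) (K : ℕ) (ω : Ω) :
    dApprox V δ K ω ≤ K * δ := by
  have h3 := (Nat.cast_le (α := ℝ)).mpr (min_le_right ⌈V ω / δ⌉₊ K)
  simp only [dApprox]
  nlinarith

lemma dApprox_ge (V : Ω → ℝ) (δ : ℝ) (hδ : 0 < δ) (B : ℝ) (K : ℕ)
    (hK : ⌈B / δ⌉₊ ≤ K) (ω : Ω) (hVB : V ω ≤ B) (hV0 : 0 ≤ V ω) :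
    V ω ≤ dApprox V δ K ω := by
  have hmin : min ⌈V ω / δ⌉₊ K = ⌈V ω / δ⌉₊ := by
    exact min_eq_left (le_trans (Nat.ceil_le_ceil (by gcongr)) hK)
  simp only [dApprox, hmin]
  have h1 := Nat.le_ceil (V ω / δ)
  rw [div_le_iff₀ hδ] at h1
  linarith

lemma dApprox_le (V : Ω → ℝ) (δ : ℝ) (hδ : 0 < δ) (K : ℕ) (ω : Ω) (hV0 : 0 ≤ V ω) :
    dApprox V δ K ω ≤ V ω + δ := by
  have h1 : ((min ⌈V ω / δ⌉₊ K : ℕ) : ℝ) ≤ (⌈V ω / δ⌉₊ : ℝ) :=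
    Nat.cast_le.mpr (min_le_left _ _)
  have h2 : (⌈V ω / δ⌉₊ : ℝ) < V ω / δ + 1 := Nat.ceil_lt_add_one (by positivity)
  have h3 : (V ω / δ) * δ = V ω := by field_simp
  simp only [dApprox]
  nlinarith

end
section
set_option linter.unusedSectionVars false
variable {Ω : Type*} {m : MeasurableSpace Ω} (μ : Measure Ω) [IsProbabilityMeasure μ]
  (F : Filtration ℝ m) (Pproc : ℝ → Ω → ℕ)

lemma meas_Pproc_comp (hPP : IsUnitRatePoissonProcess μ F Pproc)
    (V : Ω → ℕ) (hV : Measurable V) (K : ℕ) (hVK : ∀ ω, V ω ≤ K) (δ : ℝ) :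
    Measurable (fun ω => Pproc ((V ω : ℝ) * δ) ω) := by
  have heq : (fun ω => Pproc ((V ω : ℝ) * δ) ω)
      = fun ω => ∑ k ∈ Finset.range (K + 1),
          if V ω = k then Pproc ((k : ℝ) * δ) ω else 0 := by
    funext ω
    rw [Finset.sum_ite_eq (Finset.range (K + 1)) (V ω)
      (fun k => Pproc ((k : ℝ) * δ) ω)]
    rw [if_pos (Finset.mem_range.mpr (Nat.lt_succ_of_le (hVK ω)))]
  rw [heq]
  refine Finset.measurable_sum _ fun k _ => Measurable.ite ?_ (meas_Pproc μ F Pproc hPP _)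
    measurable_const
  exact hV (measurableSet_singleton k)

lemma Pproc_sq_int (hPP : IsUnitRatePoissonProcess μ F Pproc) (C : ℝ) (hC : 0 ≤ C) :
    ∫⁻ ω, ((Pproc C ω : ℕ) : ℝ≥0∞) ^ 2 ∂μ = ENNReal.ofReal (C + C ^ 2) := by
  refine poisson_sq_mean μ _ (meas_Pproc μ F Pproc hPP C) C hC fun k => ?_
  have h := hPP.poisson_law 0 C le_rfl hC k
  simp only [hPP.init, Nat.sub_zero, sub_zero] at h
  exact h

end
/-- If `T₁`, `T₂` are stopping times bounded by a constant `B ≥ 0`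
almost surely, then `E[(Π(T₂) − Π(T₁))²] ≤ (2B + 1)·E[|T₂ − T₁|]`. -/
theorem mean_square_poisson_increment_le (Ω : Type*) (m : MeasurableSpace Ω)
    (μ : Measure Ω) [IsProbabilityMeasure μ] (F : Filtration ℝ m)
    (Pproc : ℝ → Ω → ℕ) (hPP : IsUnitRatePoissonProcess μ F Pproc)
    (T₁ T₂ : Ω → ℝ) (hT₁ : IsStoppingTime F (fun ω => (T₁ ω : WithTop ℝ)))
    (hT₂ : IsStoppingTime F (fun ω => (T₂ ω : WithTop ℝ)))
    (hT₁0 : ∀ ω, 0 ≤ T₁ ω) (hT₂0 : ∀ ω, 0 ≤ T₂ ω)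
    (B : ℝ) (hB : 0 ≤ B)
    (hT₁bdd : ∀ᵐ ω ∂μ, T₁ ω ≤ B) (hT₂bdd : ∀ᵐ ω ∂μ, T₂ ω ≤ B) :
    ∫ ω, ((Pproc (T₂ ω) ω : ℝ) - (Pproc (T₁ ω) ω : ℝ)) ^ 2 ∂μ ≤
      (2 * B + 1) * ∫ ω, |T₂ ω - T₁ ω| ∂μ := by
  have hmeasP : ∀ t : ℝ, Measurable (Pproc t) := meas_Pproc μ F Pproc hPP
  set St : Ω → ℝ := fun ω => min (T₁ ω) (T₂ ω) with hSt_def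
  set Ut : Ω → ℝ := fun ω => max (T₁ ω) (T₂ ω) with hUt_def
  have hSt : IsStoppingTime F (fun ω => (St ω : WithTop ℝ)) := hT₁.min hT₂
  have hUt : IsStoppingTime F (fun ω => (Ut ω : WithTop ℝ)) := hT₁.max hT₂
  have hSt0 : ∀ ω, 0 ≤ St ω := fun ω => le_min (hT₁0 ω) (hT₂0 ω)
  have hUt0 : ∀ ω, 0 ≤ Ut ω := fun ω => le_trans (hT₁0 ω) (le_max_left _ _)
  have hStUt : ∀ ω, St ω ≤ Ut ω := fun ω => min_le_max
  have hUtB : ∀ᵐ ω ∂μ, Ut ω ≤ B := by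
    filter_upwards [hT₁bdd, hT₂bdd] with ω h1 h2
    exact max_le h1 h2
  -- the grid sizes
  set δs : ℕ → ℝ := fun n => ((n : ℝ) + 1)⁻¹ with hδs_def
  have hδpos : ∀ n, 0 < δs n := fun n => by positivity
  have hδle1 : ∀ n, δs n ≤ 1 := by
    intro n
    rw [hδs_def]
    rw [inv_le_one_iff₀]
    right
    push_cast
    linarith [Nat.cast_nonneg (α := ℝ) n]
  have hδ0 : Filter.Tendsto δs Filter.atTop (nhds 0) := by
    have := tendsto_one_div_add_atTop_nhds_zero_nat (𝕜 := ℝ)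
    simpa [hδs_def, one_div] using this
  set Ks : ℕ → ℕ := fun n => ⌈B / δs n⌉₊ + 1 with hKs_def
  set Sn : ℕ → Ω → ℝ := fun n => dApprox St (δs n) (Ks n) with hSn_def
  set Un : ℕ → Ω → ℝ := fun n => dApprox Ut (δs n) (Ks n) with hUn_def
  have hKδ : ∀ n, (Ks n : ℝ) * δs n ≤ B + 2 * δs n := by
    intro n
    have h1 : (⌈B / δs n⌉₊ : ℝ) < B / δs n + 1 := Nat.ceil_lt_add_one (by positivity)
    have h2 : (B / δs n) * δs n = B := by rw [div_mul_cancel₀ B (hδpos n).ne']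
    have h3 : ((Ks n : ℕ) : ℝ) = (⌈B / δs n⌉₊ : ℝ) + 1 := by
      rw [hKs_def]
      push_cast
      ring
    nlinarith [hδpos n]
  have hKδ2 : ∀ n, (Ks n : ℝ) * δs n ≤ B + 2 := fun n =>
    le_trans (hKδ n) (by nlinarith [hδle1 n, hδpos n])
  have hSnUn : ∀ n ω, Sn n ω ≤ Un n ω :=
    fun n ω => dApprox_mono St Ut _ (hδpos n) _ ω (hStUt ω)
  have hSn0 : ∀ n ω, 0 ≤ Sn n ω := fun n ω => dApprox_nonneg St _ (hδpos n) _ ω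
  have hUn0 : ∀ n ω, 0 ≤ Un n ω := fun n ω => dApprox_nonneg Ut _ (hδpos n) _ ω
  have hUncap : ∀ n ω, Un n ω ≤ B + 2 := fun n ω =>
    le_trans (dApprox_le_cap Ut _ (hδpos n) _ ω) (hKδ2 n)
  have hSncap : ∀ n ω, Sn n ω ≤ B + 2 := fun n ω =>
    le_trans (dApprox_le_cap St _ (hδpos n) _ ω) (hKδ2 n)
  -- discrete bound
  have hdb : ∀ n, ∫⁻ ω, ((Pproc (Un n ω) ω - Pproc (Sn n ω) ω : ℕ) : ℝ≥0∞) ^ 2 ∂μ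
      ≤ ENNReal.ofReal (1 + δs n + 2 * (Ks n) * δs n)
        * ∫⁻ ω, ENNReal.ofReal (Un n ω - Sn n ω) ∂μ := by
    intro n
    refine discrete_bound μ F Pproc hPP (δs n) (hδpos n) (Ks n) (Sn n) (Un n)
      (dApprox_isStoppingTime F St hSt _ (hδpos n) _)
      (dApprox_isStoppingTime F Ut hUt _ (hδpos n) _)
      (hSnUn n) (fun ω => ?_) (dApprox_grid Ut _ _)
    obtain ⟨k, _, hk⟩ := dApprox_grid St (δs n) (Ks n) ω
    exact ⟨k, hk⟩
  -- the limit quantities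
  set I : ℝ≥0∞ := ∫⁻ ω, ENNReal.ofReal (Ut ω - St ω) ∂μ with hI_def
  have hI_le : I ≤ ENNReal.ofReal B := by
    rw [hI_def]
    calc ∫⁻ ω, ENNReal.ofReal (Ut ω - St ω) ∂μ
        ≤ ∫⁻ _, ENNReal.ofReal B ∂μ := by
          refine lintegral_mono_ae ?_
          filter_upwards [hUtB] with ω hω
          exact ENNReal.ofReal_le_ofReal (by linarith [hSt0 ω])
      _ = ENNReal.ofReal B := by simp
  have hI_ne : I ≠ ⊤ := by
    refine ne_top_of_le_ne_top ?_ hI_le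
    exact ENNReal.ofReal_ne_top
  -- bound on the time-difference integrals
  have hRHSn : ∀ n, ∫⁻ ω, ENNReal.ofReal (Un n ω - Sn n ω) ∂μ
      ≤ I + ENNReal.ofReal (δs n) := by
    intro n
    have hstep : ∫⁻ ω, ENNReal.ofReal (Un n ω - Sn n ω) ∂μ
        ≤ ∫⁻ ω, (ENNReal.ofReal (Ut ω - St ω) + ENNReal.ofReal (δs n)) ∂μ := by
      refine lintegral_mono_ae ?_
      filter_upwards [hUtB] with ω hω
      have hStB : St ω ≤ B := le_trans (hStUt ω) hω
      have h1 : St ω ≤ Sn n ω := dApprox_ge St _ (hδpos n) B _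
        (Nat.le_succ _) ω hStB (hSt0 ω)
      have h2 : Un n ω ≤ Ut ω + δs n := dApprox_le Ut _ (hδpos n) _ ω (hUt0 ω)
      calc ENNReal.ofReal (Un n ω - Sn n ω)
          ≤ ENNReal.ofReal ((Ut ω - St ω) + δs n) :=
            ENNReal.ofReal_le_ofReal (by linarith)
        _ ≤ ENNReal.ofReal (Ut ω - St ω) + ENNReal.ofReal (δs n) :=
            ENNReal.ofReal_add_le
    refine le_trans hstep ?_
    rw [lintegral_add_right _ measurable_const, lintegral_const]
    simp [hI_def]
  -- constant bound
  have hconstn : ∀ n, ENNReal.ofReal (1 + δs n + 2 * (Ks n) * δs n)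
      ≤ ENNReal.ofReal (2 * B + 1 + 5 * δs n) := by
    intro n
    refine ENNReal.ofReal_le_ofReal ?_
    have := hKδ n
    have := hδpos n
    nlinarith
  -- integrands
  set fn : ℕ → Ω → ℝ≥0∞ := fun n ω =>
    ENNReal.ofReal (((Pproc (Un n ω) ω : ℝ) - (Pproc (Sn n ω) ω : ℝ)) ^ 2) with hfn_def
  set f : Ω → ℝ≥0∞ := fun ω =>
    ENNReal.ofReal (((Pproc (T₂ ω) ω : ℝ) - (Pproc (T₁ ω) ω : ℝ)) ^ 2) with hf_def
  have hmonoPn : ∀ n ω, Pproc (Sn n ω) ω ≤ Pproc (Un n ω) ω := fun n ω =>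
    hPP.mono ω (Set.mem_Ici.mpr (hSn0 n ω))
      (Set.mem_Ici.mpr ((hSn0 n ω).trans (hSnUn n ω))) (hSnUn n ω)
  have han_eq : ∀ n, ∫⁻ ω, ((Pproc (Un n ω) ω - Pproc (Sn n ω) ω : ℕ) : ℝ≥0∞) ^ 2 ∂μ
      = ∫⁻ ω, fn n ω ∂μ := by
    intro n
    refine lintegral_congr fun ω => ?_
    simp only [hfn_def]
    rw [← Nat.cast_sub (hmonoPn n ω),
      ← ENNReal.ofReal_natCast (Pproc (Un n ω) ω - Pproc (Sn n ω) ω),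
      ← ENNReal.ofReal_pow (Nat.cast_nonneg _)]
  have hStmeas : Measurable St := measurable_of_Iic fun t => by
    have h := F.le t _ (hSt t)
    simp only [WithTop.coe_le_coe] at h
    exact h
  have hUtmeas : Measurable Ut := measurable_of_Iic fun t => by
    have h := F.le t _ (hUt t)
    simp only [WithTop.coe_le_coe] at h
    exact h
  have hNmeas : ∀ (V : Ω → ℝ), Measurable V → ∀ n : ℕ,
      Measurable (fun ω => Pproc (dApprox V (δs n) (Ks n) ω) ω) := by
    intro V hV n
    exact meas_Pproc_comp μ F Pproc hPP (fun ω => min ⌈V ω / δs n⌉₊ (Ks n))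
      ((hV.div_const _).nat_ceil.min measurable_const)
      (Ks n) (fun ω => min_le_right _ _) (δs n)
  have hfn_meas : ∀ n, Measurable (fn n) := by
    intro n
    refine Measurable.ennreal_ofReal (Measurable.pow_const ?_ 2)
    exact ((measurable_of_countable (Nat.cast : ℕ → ℝ)).comp (hNmeas Ut hUtmeas n)).sub
      ((measurable_of_countable (Nat.cast : ℕ → ℝ)).comp (hNmeas St hStmeas n))
  -- the dominating function
  set bound : Ω → ℝ≥0∞ := fun ω => ((Pproc (B + 2) ω : ℕ) : ℝ≥0∞) ^ 2 with hbound_def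
  have hbound_fin : ∫⁻ ω, bound ω ∂μ ≠ ⊤ := by
    rw [hbound_def]
    rw [Pproc_sq_int μ F Pproc hPP (B + 2) (by linarith)]
    exact ENNReal.ofReal_ne_top
  have hfn_le : ∀ n, fn n ≤ᵐ[μ] bound := by
    intro n
    refine Filter.Eventually.of_forall fun ω => ?_
    have h1 : Pproc (Un n ω) ω ≤ Pproc (B + 2) ω :=
      hPP.mono ω (Set.mem_Ici.mpr (hUn0 n ω)) (Set.mem_Ici.mpr (by linarith)) (hUncap n ω)
    have h3 : ((Pproc (Un n ω) ω : ℝ) - (Pproc (Sn n ω) ω : ℝ)) ^ 2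
        ≤ ((Pproc (B + 2) ω : ℕ) : ℝ) ^ 2 := by
      have hc : ((Pproc (Un n ω) ω : ℕ) : ℝ) ≤ ((Pproc (B + 2) ω : ℕ) : ℝ) := by
        exact_mod_cast h1
      have hc2 : ((Pproc (Sn n ω) ω : ℕ) : ℝ) ≤ ((Pproc (Un n ω) ω : ℕ) : ℝ) := by
        exact_mod_cast hmonoPn n ω
      have hnn : (0 : ℝ) ≤ ((Pproc (Sn n ω) ω : ℕ) : ℝ) := Nat.cast_nonneg _
      nlinarith
    calc fn n ω ≤ ENNReal.ofReal (((Pproc (B + 2) ω : ℕ) : ℝ) ^ 2) :=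
          ENNReal.ofReal_le_ofReal h3
      _ = bound ω := by
          simp only [hbound_def]
          rw [← ENNReal.ofReal_natCast (Pproc (B + 2) ω),
            ← ENNReal.ofReal_pow (Nat.cast_nonneg _)]
  -- pointwise convergence
  have hconv_real : ∀ᵐ ω ∂μ, Filter.Tendsto
      (fun n => ((Pproc (Un n ω) ω : ℝ) - (Pproc (Sn n ω) ω : ℝ)) ^ 2) Filter.atTop
      (nhds (((Pproc (Ut ω) ω : ℝ) - (Pproc (St ω) ω : ℝ)) ^ 2)) := by
    filter_upwards [hUtB] with ω hω
    have hStB : St ω ≤ B := le_trans (hStUt ω) hω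
    have hSconv : Filter.Tendsto (fun n => Sn n ω) Filter.atTop (nhds (St ω)) := by
      refine tendsto_of_tendsto_of_tendsto_of_le_of_le (g := fun _ => St ω)
        (h := fun n => St ω + δs n) tendsto_const_nhds ?_ ?_ ?_
      · simpa using (hδ0.const_add (St ω))
      · intro n
        exact dApprox_ge St _ (hδpos n) B _ (Nat.le_succ _) ω hStB (hSt0 ω)
      · intro n
        exact dApprox_le St _ (hδpos n) _ ω (hSt0 ω)
    have hUconv : Filter.Tendsto (fun n => Un n ω) Filter.atTop (nhds (Ut ω)) := by
      refine tendsto_of_tendsto_of_tendsto_of_le_of_le (g := fun _ => Ut ω)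
        (h := fun n => Ut ω + δs n) tendsto_const_nhds ?_ ?_ ?_
      · simpa using (hδ0.const_add (Ut ω))
      · intro n
        exact dApprox_ge Ut _ (hδpos n) B _ (Nat.le_succ _) ω hω (hUt0 ω)
      · intro n
        exact dApprox_le Ut _ (hδpos n) _ ω (hUt0 ω)
    have hPS : Filter.Tendsto (fun n => (Pproc (Sn n ω) ω : ℝ)) Filter.atTop
        (nhds ((Pproc (St ω) ω : ℝ))) := by
      refine ((hPP.rightCont ω (St ω) (hSt0 ω)).tendsto).comp ?_
      refine tendsto_nhdsWithin_of_tendsto_nhds_of_eventually_within _ hSconv ?_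
      exact Filter.Eventually.of_forall fun n => Set.mem_Ici.mpr
        (dApprox_ge St _ (hδpos n) B _ (Nat.le_succ _) ω hStB (hSt0 ω))
    have hPU : Filter.Tendsto (fun n => (Pproc (Un n ω) ω : ℝ)) Filter.atTop
        (nhds ((Pproc (Ut ω) ω : ℝ))) := by
      refine ((hPP.rightCont ω (Ut ω) (hUt0 ω)).tendsto).comp ?_
      refine tendsto_nhdsWithin_of_tendsto_nhds_of_eventually_within _ hUconv ?_
      exact Filter.Eventually.of_forall fun n => Set.mem_Ici.mpr
        (dApprox_ge Ut _ (hδpos n) B _ (Nat.le_succ _) ω hω (hUt0 ω))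
    exact (hPU.sub hPS).pow 2
  have hsq_eq : ∀ ω, ((Pproc (Ut ω) ω : ℝ) - (Pproc (St ω) ω : ℝ)) ^ 2
      = ((Pproc (T₂ ω) ω : ℝ) - (Pproc (T₁ ω) ω : ℝ)) ^ 2 := by
    intro ω
    rcases le_total (T₁ ω) (T₂ ω) with h | h
    · have h1 : Ut ω = T₂ ω := max_eq_right h
      have h2 : St ω = T₁ ω := min_eq_left h
      rw [h1, h2]
    · have h1 : Ut ω = T₁ ω := max_eq_left h
      have h2 : St ω = T₂ ω := min_eq_right h
      rw [h1, h2]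
      ring
  have hconv : ∀ᵐ ω ∂μ, Filter.Tendsto (fun n => fn n ω) Filter.atTop (nhds (f ω)) := by
    filter_upwards [hconv_real] with ω hω
    simp only [hf_def]
    rw [← hsq_eq ω]
    exact ENNReal.tendsto_ofReal hω
  have hlim : Filter.Tendsto (fun n => ∫⁻ ω, fn n ω ∂μ) Filter.atTop
      (nhds (∫⁻ ω, f ω ∂μ)) :=
    tendsto_lintegral_of_dominated_convergence bound hfn_meas hfn_le hbound_fin hconv
  -- the upper bounds and their limit
  set bn : ℕ → ℝ≥0∞ := fun n =>
    ENNReal.ofReal (2 * B + 1 + 5 * δs n) * (I + ENNReal.ofReal (δs n)) with hbn_def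
  have hanbn : ∀ n, ∫⁻ ω, fn n ω ∂μ ≤ bn n := by
    intro n
    rw [← han_eq n]
    exact le_trans (hdb n) (mul_le_mul' (hconstn n) (hRHSn n))
  have hbn_lim : Filter.Tendsto bn Filter.atTop (nhds (ENNReal.ofReal (2 * B + 1) * I)) := by
    have t1 : Filter.Tendsto (fun n => ENNReal.ofReal (2 * B + 1 + 5 * δs n)) Filter.atTop
        (nhds (ENNReal.ofReal (2 * B + 1))) := by
      refine ENNReal.tendsto_ofReal ?_
      have := (hδ0.const_mul (5 : ℝ)).const_add (2 * B + 1)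
      simpa using this
    have t2 : Filter.Tendsto (fun n => I + ENNReal.ofReal (δs n)) Filter.atTop (nhds I) := by
      have h2 : Filter.Tendsto (fun n => ENNReal.ofReal (δs n)) Filter.atTop (nhds 0) := by
        have := ENNReal.tendsto_ofReal hδ0
        simpa using this
      have h3 := Filter.Tendsto.add (tendsto_const_nhds (x := I) (f := Filter.atTop)) h2
      simpa using h3
    have := ENNReal.Tendsto.mul t1 (Or.inr hI_ne) t2 (Or.inr ENNReal.ofReal_ne_top)
    exact this
  have hfinal : ∫⁻ ω, f ω ∂μ ≤ ENNReal.ofReal (2 * B + 1) * I :=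
    le_of_tendsto_of_tendsto' hlim hbn_lim hanbn
  -- convert to real integrals
  have hq_meas : AEStronglyMeasurable
      (fun ω => ((Pproc (T₂ ω) ω : ℝ) - (Pproc (T₁ ω) ω : ℝ)) ^ 2) μ := by
    refine aestronglyMeasurable_of_tendsto_ae
      (f := fun n ω => ((Pproc (Un n ω) ω : ℝ) - (Pproc (Sn n ω) ω : ℝ)) ^ 2)
      Filter.atTop (fun n => Measurable.aestronglyMeasurable ?_) ?_
    · exact (((measurable_of_countable (Nat.cast : ℕ → ℝ)).comp (hNmeas Ut hUtmeas n)).sub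
        ((measurable_of_countable (Nat.cast : ℕ → ℝ)).comp (hNmeas St hStmeas n))).pow_const 2
    · filter_upwards [hconv_real] with ω hω
      rw [hsq_eq ω] at hω
      exact hω
  have hLHS : ∫ ω, ((Pproc (T₂ ω) ω : ℝ) - (Pproc (T₁ ω) ω : ℝ)) ^ 2 ∂μ
      = (∫⁻ ω, f ω ∂μ).toReal := by
    rw [integral_eq_lintegral_of_nonneg_ae
      (Filter.Eventually.of_forall fun ω => sq_nonneg _) hq_meas]
  have hT₁m : Measurable T₁ := measurable_of_Iic fun t => by
    have h := F.le t _ (hT₁ t)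
    simp only [WithTop.coe_le_coe] at h
    exact h
  have hT₂m : Measurable T₂ := measurable_of_Iic fun t => by
    have h := F.le t _ (hT₂ t)
    simp only [WithTop.coe_le_coe] at h
    exact h
  have habs : ∀ ω, |T₂ ω - T₁ ω| = Ut ω - St ω := by
    intro ω
    exact (max_sub_min_eq_abs (T₁ ω) (T₂ ω)).symm
  have hRHS : ∫ ω, |T₂ ω - T₁ ω| ∂μ = I.toReal := by
    rw [integral_eq_lintegral_of_nonneg_ae (f := fun ω => |T₂ ω - T₁ ω|)
      (Filter.Eventually.of_forall fun ω => abs_nonneg _)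
      ((hT₂m.sub hT₁m).abs.aestronglyMeasurable : AEStronglyMeasurable (fun ω => |T₂ ω - T₁ ω|) μ)]
    congr 1
    rw [hI_def]
    exact lintegral_congr fun ω => by rw [habs ω]
  rw [hLHS, hRHS]
  have hne : ENNReal.ofReal (2 * B + 1) * I ≠ ⊤ :=
    ENNReal.mul_ne_top ENNReal.ofReal_ne_top hI_ne
  calc (∫⁻ ω, f ω ∂μ).toReal
      ≤ (ENNReal.ofReal (2 * B + 1) * I).toReal := ENNReal.toReal_mono hne hfinal
    _ = (2 * B + 1) * I.toReal := by
        rw [ENNReal.toReal_mul, ENNReal.toReal_ofReal (by linarith)]
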